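/- Let f : M_n(ℂ) → ℂ be a Lipschitz function whose complex (Fréchet) differential exists at almost every point of M_n(ℂ) with respect to Lebesgue measure. Then for all a, b ∈ M_n(ℂ), the function z ↦ f(a + z·b) from ℂ to ℂ is affine. -/

import Mathlib

open scoped Matrix.Norms.L2Operator
open MeasureTheory

open MeasureTheory Metric Set Filter

-- Lipschitz bound on the complex derivative
lemma norm_deriv_le_lip {g : ℂ → ℂ} {L : NNReal} (hl : LipschitzWith L g) (x : ℂ) :
    ‖deriv g x‖ ≤ L := by
  by_cases h : DifferentiableAt ℂ g x
  · have hs : Tendsto (slope g x) (nhdsWithin x {x}ᶜ) (nhds (deriv g x)) :=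
      hasDerivAt_iff_tendsto_slope.1 h.hasDerivAt
    have : Tendsto (fun z => ‖slope g x z‖) (nhdsWithin x {x}ᶜ) (nhds ‖deriv g x‖) :=
      hs.norm
    refine le_of_tendsto this ?_
    filter_upwards [self_mem_nhdsWithin] with z hz
    have hz' : z ≠ x := hz
    have hlip : ‖g z - g x‖ ≤ L * ‖z - x‖ := by
      have := hl.dist_le_mul z x
      simpa [dist_eq_norm] using this
    rw [slope_def_field, norm_div]
    rw [div_le_iff₀ (by simpa [sub_ne_zero] using hz')]
    exact hlip
  · simp [deriv_zero_of_not_differentiableAt h]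

-- Entire + Lipschitz implies affine
lemma affine_of_entire_lip {g : ℂ → ℂ} {L : NNReal} (hd : Differentiable ℂ g)
    (hl : LipschitzWith L g) : ∀ z : ℂ, g z = (g 1 - g 0) * z + g 0 := by
  have hderiv : Differentiable ℂ (deriv g) := by
    have h := (hd.differentiableOn.analyticOnNhd isOpen_univ).deriv
    exact fun x => (h x (mem_univ x)).differentiableAt
  have hbound : ∀ x, ‖deriv g x‖ ≤ L := fun x => norm_deriv_le_lip hl x
  have hconst : ∀ z, deriv g z = deriv g 0 := by
    intro z
    exact hderiv.apply_eq_apply_of_bounded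
      (isBounded_iff_forall_norm_le.2 ⟨L, by rintro x ⟨y, rfl⟩; exact hbound y⟩) z 0
  set c := deriv g 0 with hc
  have key : ∀ z, g z = c * z + g 0 := by
    have hdiff2 : Differentiable ℂ (fun z => g z - c * z) := hd.sub (by fun_prop)
    have hz : ∀ z, deriv (fun z => g z - c * z) z = 0 := by
      intro z
      rw [deriv_fun_sub (hd z) (by fun_prop)]
      rw [hconst z]
      have : deriv (fun w => c * w) z = c := by
        simpa using (((hasDerivAt_id z).const_mul c).deriv)
      rw [show (HMul.hMul c) = (fun w => c * w) from rfl, this, sub_self]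
    intro z
    have := is_const_of_deriv_eq_zero hdiff2 hz z 0
    have h0 : g z - c * z = g 0 - c * 0 := this
    linear_combination h0
  intro z
  have h1 := key 1
  have hz := key z
  rw [hz, h1]
  ring

-- Lipschitz + a.e. complex differentiable on ℂ implies affine
lemma oneD {g : ℂ → ℂ} {L : NNReal} (hl : LipschitzWith L g)
    (hd : ∀ᵐ z ∂(volume : Measure ℂ), DifferentiableAt ℂ g z) :
    ∀ z : ℂ, g z = (g 1 - g 0) * z + g 0 := by
  have hcont : Continuous g := hl.continuous
  -- almost every translate is a differentiability point
  have hDnull : volume {z : ℂ | ¬ DifferentiableAt ℂ g z} = 0 := by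
    rwa [← ae_iff]
  have hae : ∀ w : ℂ, ∀ᵐ u ∂(volume : Measure ℂ), DifferentiableAt ℂ g (w - u) := by
    intro w
    rw [ae_iff]
    have hmp : MeasurePreserving (fun u : ℂ => w - u) volume volume :=
      Measure.measurePreserving_sub_left volume w
    have : {u : ℂ | ¬ DifferentiableAt ℂ g (w - u)} =
        (fun u : ℂ => w - u) ⁻¹' {z : ℂ | ¬ DifferentiableAt ℂ g z} := rfl
    rw [this]
    rw [show {z : ℂ | ¬ DifferentiableAt ℂ g z} = {z : ℂ | DifferentiableAt ℂ g z}ᶜ from rfl]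
    rw [hmp.measure_preimage ((measurableSet_of_differentiableAt ℂ g).compl.nullMeasurableSet)]
    exact hDnull
  -- the mollified functions
  have main : ∀ ε : ℝ, 0 < ε → ∀ w : ℂ,
      ‖g w - ((g 1 - g 0) * w + g 0)‖ ≤ (L * ε) * (2 + 2 * ‖w‖) := by
    intro ε hε
    set K : Set ℂ := Metric.ball 0 ε with hK
    have hKfin : volume K < ⊤ := measure_ball_lt_top
    have hKpos : 0 < volume K := Metric.measure_ball_pos volume 0 hε
    set V : ℝ := (volume K).toReal with hV
    have hVpos : 0 < V := ENNReal.toReal_pos hKpos.ne' hKfin.ne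
    set G : ℂ → ℂ := fun w => V⁻¹ • ∫ u in K, g (w - u) with hG
    -- integrability
    have hint : ∀ w : ℂ, IntegrableOn (fun u => g (w - u)) K volume := by
      intro w
      apply Measure.integrableOn_of_bounded (M := (L:ℝ) * ε + ‖g w‖) hKfin.ne
        ((hcont.comp (continuous_const.sub continuous_id)).aestronglyMeasurable)
      filter_upwards [ae_restrict_mem measurableSet_ball] with u hu
      have : ‖g (w - u) - g w‖ ≤ L * ‖u‖ := by
        have := hl.dist_le_mul (w - u) w
        simpa [dist_eq_norm, sub_sub_cancel_left, norm_neg] using this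
      have h2 := norm_sub_norm_le (g (w - u)) (g w)
      have hu' : ‖u‖ ≤ ε := le_of_lt (mem_ball_zero_iff.1 hu)
      have : (L:ℝ) * ‖u‖ ≤ L * ε := by nlinarith [L.coe_nonneg]
      show ‖g (w - u)‖ ≤ (L:ℝ) * ε + ‖g w‖
      linarith
    -- G is Lipschitz with constant L
    have hGlip : LipschitzWith L G := by
      apply LipschitzWith.of_dist_le_mul
      intro x y
      rw [dist_eq_norm]
      have hxy : G x - G y = V⁻¹ • ∫ u in K, (g (x - u) - g (y - u)) := by
        rw [hG]
        dsimp only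
        rw [← smul_sub, ← integral_sub (hint x) (hint y)]
      rw [hxy, norm_smul]
      have hb : ‖∫ u in K, (g (x - u) - g (y - u))‖ ≤ ((L : ℝ) * dist x y) * V := by
        apply norm_setIntegral_le_of_norm_le_const hKfin
        · intro u _hu
          have := hl.dist_le_mul (x - u) (y - u)
          simpa [dist_eq_norm, sub_sub_sub_cancel_right] using this
      have hVn : ‖V⁻¹‖ = V⁻¹ := by
        rw [Real.norm_eq_abs, abs_of_pos (by positivity)]
      rw [hVn]
      calc V⁻¹ * ‖∫ u in K, (g (x - u) - g (y - u))‖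
          ≤ V⁻¹ * (((L : ℝ) * dist x y) * V) := by
            apply mul_le_mul_of_nonneg_left hb (by positivity)
        _ = (L : ℝ) * dist x y := by field_simp
    -- G is entire
    have hGdiff : Differentiable ℂ G := by
      intro w
      set c : ℂ := V⁻¹ • ∫ u in K, deriv g (w - u) with hc
      have h1 : Filter.Tendsto (fun z : ℂ => ∫ u in K, slope g (w - u) (z - u))
          (nhdsWithin w {w}ᶜ) (nhds (∫ u in K, deriv g (w - u))) := by
        apply tendsto_integral_filter_of_dominated_convergence (bound := fun _ => (L : ℝ))
        · filter_upwards [self_mem_nhdsWithin] with z _hz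
          have hfe : (fun u : ℂ => slope g (w - u) (z - u)) =
              fun u => (g (z - u) - g (w - u)) / (z - w) := by
            funext u
            have hden : z - u - (w - u) = z - w := by ring
            rw [slope_def_field, hden]
          rw [hfe]
          exact (((hcont.comp (continuous_const.sub continuous_id)).sub
            (hcont.comp (continuous_const.sub continuous_id))).div_const _).aestronglyMeasurable
        · filter_upwards [self_mem_nhdsWithin] with z hz
          apply Filter.Eventually.of_forall
          intro u
          have hden : z - u - (w - u) = z - w := by ring
          have hden' : z - u - (w - u) ≠ 0 := by
            rw [hden, sub_ne_zero]; exact hz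
          rw [slope_def_field, norm_div]
          rw [div_le_iff₀ (norm_pos_iff.mpr hden')]
          have := hl.dist_le_mul (z - u) (w - u)
          simpa [dist_eq_norm] using this
        · exact integrableOn_const hKfin.ne
        · filter_upwards [ae_restrict_of_ae (hae w)] with u hu
          have hslope := hasDerivAt_iff_tendsto_slope.1 hu.hasDerivAt
          have hmap : Filter.Tendsto (fun z : ℂ => z - u) (nhdsWithin w {w}ᶜ)
              (nhdsWithin (w - u) {w - u}ᶜ) := by
            rw [tendsto_nhdsWithin_iff]
            constructor
            · exact ((continuous_id.sub continuous_const).tendsto w).mono_left nhdsWithin_le_nhds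
            · filter_upwards [self_mem_nhdsWithin] with z hz
              simp only [Set.mem_compl_iff, Set.mem_singleton_iff] at hz ⊢
              intro h
              exact hz (by linear_combination h)
          exact hslope.comp hmap
      have h2 : Filter.Tendsto (fun z : ℂ => V⁻¹ • ∫ u in K, slope g (w - u) (z - u))
          (nhdsWithin w {w}ᶜ) (nhds c) := h1.const_smul V⁻¹
      have heq : ∀ᶠ z in nhdsWithin w {w}ᶜ,
          V⁻¹ • ∫ u in K, slope g (w - u) (z - u) = slope G w z := by
        filter_upwards [self_mem_nhdsWithin] with z hz
        have hA : ∫ u in K, slope g (w - u) (z - u) =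
            (z - w)⁻¹ * ∫ u in K, (g (z - u) - g (w - u)) := by
          rw [← integral_const_mul]
          congr 1; funext u
          have hden : z - u - (w - u) = z - w := by ring
          rw [slope_def_field, hden, div_eq_inv_mul]
        have hsub : G z - G w = V⁻¹ • ∫ u in K, (g (z - u) - g (w - u)) := by
          rw [hG]; dsimp only
          rw [← smul_sub, ← integral_sub (hint z) (hint w)]
        rw [slope_def_field, hsub, div_eq_inv_mul, hA]
        exact (mul_smul_comm _ _ _).symm
      exact (hasDerivAt_iff_tendsto_slope.2 (h2.congr' heq)).differentiableAt
    -- G approximates g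
    have happrox : ∀ w : ℂ, ‖G w - g w‖ ≤ (L : ℝ) * ε := by
      intro w
      have hsub : G w - g w = V⁻¹ • ∫ u in K, (g (w - u) - g w) := by
        rw [integral_sub (hint w) (integrableOn_const hKfin.ne), hG]
        dsimp only
        rw [setIntegral_const, smul_sub, smul_smul, measureReal_def, ← hV, inv_mul_cancel₀ hVpos.ne', one_smul]
      rw [hsub, norm_smul]
      have hb : ‖∫ u in K, (g (w - u) - g w)‖ ≤ ((L : ℝ) * ε) * V := by
        apply norm_setIntegral_le_of_norm_le_const hKfin
        · intro u hu
          have h1 : ‖g (w - u) - g w‖ ≤ (L : ℝ) * ‖u‖ := by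
            have := hl.dist_le_mul (w - u) w
            simpa [dist_eq_norm, sub_sub_cancel_left, norm_neg] using this
          have hu' : ‖u‖ ≤ ε := le_of_lt (mem_ball_zero_iff.1 hu)
          nlinarith [L.coe_nonneg]
      have hVn : ‖V⁻¹‖ = V⁻¹ := by
        rw [Real.norm_eq_abs, abs_of_pos (by positivity)]
      rw [hVn]
      calc V⁻¹ * ‖∫ u in K, (g (w - u) - g w)‖ ≤ V⁻¹ * (((L : ℝ) * ε) * V) := by
            apply mul_le_mul_of_nonneg_left hb (by positivity)
        _ = (L : ℝ) * ε := by field_simp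
    -- conclude the estimate
    have haff := affine_of_entire_lip hGdiff hGlip
    intro w
    have key : g w - ((g 1 - g 0) * w + g 0) =
        (g w - G w) + ((G 1 - g 1) - (G 0 - g 0)) * w + (G 0 - g 0) := by
      have h := sub_eq_zero.2 (haff w)
      linear_combination h
    have hb1 : ‖g w - G w‖ ≤ (L : ℝ) * ε := by rw [norm_sub_rev]; exact happrox w
    have hb2 : ‖G 1 - g 1‖ ≤ (L : ℝ) * ε := happrox 1
    have hb3 : ‖G 0 - g 0‖ ≤ (L : ℝ) * ε := happrox 0
    calc ‖g w - ((g 1 - g 0) * w + g 0)‖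
        = ‖(g w - G w) + ((G 1 - g 1) - (G 0 - g 0)) * w + (G 0 - g 0)‖ := by rw [key]
      _ ≤ ‖g w - G w‖ + ‖((G 1 - g 1) - (G 0 - g 0)) * w‖ + ‖G 0 - g 0‖ := norm_add₃_le
      _ ≤ (L : ℝ) * ε + ((L : ℝ) * ε + (L : ℝ) * ε) * ‖w‖ + (L : ℝ) * ε := by
          have h4 : ‖(G 1 - g 1) - (G 0 - g 0)‖ ≤ (L : ℝ) * ε + (L : ℝ) * ε :=
            le_trans (norm_sub_le _ _) (add_le_add hb2 hb3)
          have h5 : ‖((G 1 - g 1) - (G 0 - g 0)) * w‖ ≤ ((L : ℝ) * ε + (L : ℝ) * ε) * ‖w‖ := by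
            rw [norm_mul]
            exact mul_le_mul_of_nonneg_right h4 (norm_nonneg w)
          linarith
      _ ≤ (L : ℝ) * ε * (2 + 2 * ‖w‖) := by nlinarith [norm_nonneg w, mul_nonneg L.coe_nonneg hε.le]
  -- conclude
  intro z
  have h0 : ‖g z - ((g 1 - g 0) * z + g 0)‖ ≤ 0 := by
    apply le_of_forall_pos_le_add
    intro δ hδ
    rw [zero_add]
    rcases le_or_gt (L : ℝ) 0 with hL | hL
    · have hL0 : (L : ℝ) = 0 := le_antisymm hL L.coe_nonneg
      exact le_trans (by simpa [hL0] using main 1 one_pos z) hδ.le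
    · have hεpos : 0 < δ / ((L : ℝ) * (2 + 2 * ‖z‖)) := by positivity
      have := main _ hεpos z
      calc ‖g z - ((g 1 - g 0) * z + g 0)‖
          ≤ (L * (δ / ((L : ℝ) * (2 + 2 * ‖z‖)))) * (2 + 2 * ‖z‖) := this
        _ = δ := by field_simp
  have : g z - ((g 1 - g 0) * z + g 0) = 0 := by
    rw [← norm_le_zero_iff]; exact h0
  exact sub_eq_zero.1 this


theorem stmt_14 (n : ℕ) (f : Matrix (Fin n) (Fin n) ℂ → ℂ)
    (L : NNReal) (hLip : LipschitzWith L f)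
    [MeasurableSpace (Matrix (Fin n) (Fin n) ℂ)]
    [BorelSpace (Matrix (Fin n) (Fin n) ℂ)]
    (μ : Measure (Matrix (Fin n) (Fin n) ℂ)) [μ.IsAddHaarMeasure]
    (hdiff : ∀ᵐ x ∂μ, DifferentiableAt ℂ f x) :
    ∀ a b : Matrix (Fin n) (Fin n) ℂ, ∃ α β : ℂ, ∀ z : ℂ, f (a + z • b) = α * z + β := by
  intro a b
  have hfc : Continuous f := hLip.continuous
  -- each slice is Lipschitz
  have hslice_lip : ∀ a' : Matrix (Fin n) (Fin n) ℂ,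
      LipschitzWith (L * ‖b‖₊) (fun z : ℂ => f (a' + z • b)) := by
    intro a'
    apply LipschitzWith.of_dist_le_mul
    intro z1 z2
    calc dist (f (a' + z1 • b)) (f (a' + z2 • b))
        ≤ L * dist (a' + z1 • b) (a' + z2 • b) := hLip.dist_le_mul _ _
      _ = L * ‖(z1 - z2) • b‖ := by
          rw [dist_eq_norm]
          congr 2
          module
      _ = ((L * ‖b‖₊ : NNReal) : ℝ) * dist z1 z2 := by
          rw [norm_smul, dist_eq_norm]
          push_cast
          ring
  -- differentiability set
  set D := {x : Matrix (Fin n) (Fin n) ℂ | DifferentiableAt ℂ f x} with hD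
  have hDm : MeasurableSet D := measurableSet_of_differentiableAt ℂ f
  have hDc : μ Dᶜ = 0 := ae_iff.1 hdiff
  have : SigmaCompactSpace (Matrix (Fin n) (Fin n) ℂ) :=
    (inferInstance : SigmaCompactSpace (Fin n → Fin n → ℂ))
  -- Fubini: for a.e. translate, a.e. point on the line is a differentiability point
  have prodnull : (μ.prod (volume : Measure ℂ))
      {p : Matrix (Fin n) (Fin n) ℂ × ℂ | p.1 + p.2 • b ∈ Dᶜ} = 0 := by
    have hTm : Measurable (fun p : Matrix (Fin n) (Fin n) ℂ × ℂ => p.1 + p.2 • b) :=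
      (continuous_fst.add (continuous_snd.smul continuous_const)).measurable
    have hSm : MeasurableSet {p : Matrix (Fin n) (Fin n) ℂ × ℂ | p.1 + p.2 • b ∈ Dᶜ} :=
      hTm hDm.compl
    rw [Measure.prod_apply_symm hSm]
    have hz : ∀ z : ℂ, μ ((fun a' : Matrix (Fin n) (Fin n) ℂ => (a', z)) ⁻¹'
        {p : Matrix (Fin n) (Fin n) ℂ × ℂ | p.1 + p.2 • b ∈ Dᶜ}) = 0 := by
      intro z
      have h1 : (fun a' : Matrix (Fin n) (Fin n) ℂ => (a', z)) ⁻¹'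
          {p : Matrix (Fin n) (Fin n) ℂ × ℂ | p.1 + p.2 • b ∈ Dᶜ} = (· + z • b) ⁻¹' Dᶜ := rfl
      rw [h1, measure_preimage_add_right μ (z • b) Dᶜ]
      exact hDc
    simp only [hz]
    simp
  have hfub : ∀ᵐ a' ∂μ, ∀ᵐ z ∂(volume : Measure ℂ), (a' + z • b) ∈ D := by
    have hp : ∀ᵐ p ∂(μ.prod (volume : Measure ℂ)), p.1 + p.2 • b ∈ D := by
      rw [ae_iff]
      exact prodnull
    exact Measure.ae_ae_of_ae_prod hp
  -- the good set
  set C := {a' : Matrix (Fin n) (Fin n) ℂ |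
    ∀ z : ℂ, f (a' + z • b) = (f (a' + b) - f a') * z + f a'} with hC
  have hCae : ∀ᵐ a' ∂μ, a' ∈ C := by
    filter_upwards [hfub] with a' ha'
    have hd1 : ∀ᵐ z ∂(volume : Measure ℂ), DifferentiableAt ℂ (fun z : ℂ => f (a' + z • b)) z := by
      filter_upwards [ha'] with z hz
      have hinner : DifferentiableAt ℂ (fun z : ℂ => a' + z • b) z :=
        (differentiableAt_const a').add (differentiableAt_id.smul_const b)
      exact DifferentiableAt.comp z hz hinner
    have hg := oneD (hslice_lip a') hd1
    intro z
    simpa [one_smul, zero_smul] using hg z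
  have hμC : μ Cᶜ = 0 := ae_iff.1 hCae
  have hCclosed : IsClosed C := by
    have hCeq : C = ⋂ z : ℂ, {a' : Matrix (Fin n) (Fin n) ℂ |
        f (a' + z • b) = (f (a' + b) - f a') * z + f a'} := by
      ext a'
      simp [hC, Set.mem_iInter]
    rw [hCeq]
    apply isClosed_iInter
    intro z
    apply isClosed_eq
    · exact hfc.comp (continuous_id.add continuous_const)
    · exact (((hfc.comp (continuous_id.add continuous_const)).sub hfc).mul
        continuous_const).add hfc
  have haC : a ∈ C := by
    by_contra h
    have hne : (Cᶜ).Nonempty := ⟨a, h⟩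
    have hpos := hCclosed.isOpen_compl.measure_pos μ hne
    exact absurd hμC hpos.ne'
  exact ⟨f (a + b) - f a, f a, haC⟩
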